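/- Let ζ = 2cos(2π/13) + 2cos(10π/13) and ζ′ = 2cos(4π/13) + 2cos(6π/13). Let A be the 6×22 integer matrix with rows r₁ = (1,1,1,1,1,1,0,0,0,0,0,0,0,0,0,0,0,0,0,0,0,0), r₂ = (0,1,1,2,1,0,1,1,1,1,1,1,1,1,0,0,0,0,1,1,1,1), r₃ = (0,2,1,1,1,3,2,2,2,2,2,2,2,2,1,1,1,1,1,1,1,1), r₄ = (0,4,1,2,4,2,3,3,3,3,4,4,4,4,3,3,3,3,1,1,1,1), r₅ = (0,5,1,4,2,3,3,3,3,3,5,5,5,5,4,4,4,4,1,1,1,1), r₆ = (0,3,1,1,2,2,1,1,1,1,3,3,3,3,2,2,2,2,1,1,1,1). Let v ∈ ℝ²² be the vector with entries ((7−5ζ′)/65, (12+5ζ+5ζ′)/65, (7−5ζ)/65, 1/5, 1/5, 1/5, 1/5, 1/5, 1/5, 1/5, (1+ζ+2ζ′)/13, (1+ζ+2ζ′)/13, (1+ζ+2ζ′)/13, (1+ζ+2ζ′)/13, (1+2ζ+ζ′)/13, (1+2ζ+ζ′)/13, (1+2ζ+ζ′)/13, (1+2ζ+ζ′)/13, (ζ′−ζ)/13,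 (ζ′−ζ)/13, (ζ′−ζ)/13, (ζ′−ζ)/13), in this order. Then AᵀA·v = (295 + 125ζ + 175ζ′)·v; that is, v is an eigenvector of AᵀA with eigenvalue 295 + 125ζ + 175ζ′. -/

import Mathlib

open Matrix Real

/-- `ζ = 2cos(2π/13) + 2cos(10π/13)`. -/
noncomputable def zeta : ℝ := 2 * Real.cos (2 * π / 13) + 2 * Real.cos (10 * π / 13)

/-- `ζ′ = 2cos(4π/13) + 2cos(6π/13)`. -/
noncomputable def zeta' : ℝ := 2 * Real.cos (4 * π / 13) + 2 * Real.cos (6 * π / 13)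

lemma pc' (x y s d : ℝ) (hs : Real.cos s = Real.cos (x + y))
    (hd : Real.cos d = Real.cos (x - y)) :
    (2 * Real.cos x) * (2 * Real.cos y) = 2 * Real.cos s + 2 * Real.cos d := by
  rw [hs, hd, Real.cos_add, Real.cos_sub]; ring

lemma tele (x a b : ℝ) (ha : a = x + π/13) (hb : b = x - π/13) :
    Real.sin (π/13) * (2 * Real.cos x) = Real.sin a - Real.sin b := by
  rw [ha, hb, Real.sin_add, Real.sin_sub]; ring

lemma csum : 2*Real.cos (2*π/13) + 2*Real.cos (4*π/13) + 2*Real.cos (6*π/13)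
    + 2*Real.cos (8*π/13) + 2*Real.cos (10*π/13) + 2*Real.cos (12*π/13) = -1 := by
  have hpi := Real.pi_pos
  have hs : Real.sin (π/13) ≠ 0 :=
    ne_of_gt (Real.sin_pos_of_pos_of_lt_pi (by positivity) (by linarith))
  have e1 := tele (2*π/13) (3*π/13) (π/13) (by ring) (by ring)
  have e2 := tele (4*π/13) (5*π/13) (3*π/13) (by ring) (by ring)
  have e3 := tele (6*π/13) (7*π/13) (5*π/13) (by ring) (by ring)
  have e4 := tele (8*π/13) (9*π/13) (7*π/13) (by ring) (by ring)
  have e5 := tele (10*π/13) (11*π/13) (9*π/13) (by ring) (by ring)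
  have e6 := tele (12*π/13) π (11*π/13) (by ring) (by ring)
  have hp : Real.sin π = 0 := Real.sin_pi
  apply mul_left_cancel₀ hs
  linear_combination e1 + e2 + e3 + e4 + e5 + e6 + hp

lemma hzz : zeta ^ 2 = 2 - 2 * zeta - zeta' := by
  have P11 := pc' (2*π/13) (2*π/13) (4*π/13) 0 (by congr 1; ring) (by congr 1; ring)
  have P15 := pc' (2*π/13) (10*π/13) (12*π/13) (8*π/13) (by congr 1; ring)
    (by rw [show 2*π/13 - 10*π/13 = -(8*π/13) by ring, Real.cos_neg])
  have P55 := pc' (10*π/13) (10*π/13) (6*π/13) 0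
    (by rw [show 10*π/13 + 10*π/13 = 2*π - 6*π/13 by ring, Real.cos_two_pi_sub]) (by congr 1; ring)
  have hc0 : Real.cos 0 = 1 := Real.cos_zero
  unfold zeta zeta'
  linear_combination P11 + 2*P15 + P55 + 2*csum + 4*hc0

lemma hzzp : zeta * zeta' = zeta' - 1 := by
  have P12 := pc' (2*π/13) (4*π/13) (6*π/13) (2*π/13) (by congr 1; ring)
    (by rw [show 2*π/13 - 4*π/13 = -(2*π/13) by ring, Real.cos_neg])
  have P13 := pc' (2*π/13) (6*π/13) (8*π/13) (4*π/13) (by congr 1; ring)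
    (by rw [show 2*π/13 - 6*π/13 = -(4*π/13) by ring, Real.cos_neg])
  have P52 := pc' (10*π/13) (4*π/13) (12*π/13) (6*π/13)
    (by rw [show 10*π/13 + 4*π/13 = 2*π - 12*π/13 by ring, Real.cos_two_pi_sub]) (by congr 1; ring)
  have P53 := pc' (10*π/13) (6*π/13) (10*π/13) (4*π/13)
    (by rw [show 10*π/13 + 6*π/13 = 2*π - 10*π/13 by ring, Real.cos_two_pi_sub]) (by congr 1; ring)
  unfold zeta zeta'
  linear_combination P12 + P13 + P52 + P53 + csum

lemma hzpzp : zeta' ^ 2 = 3 + zeta - zeta' := by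
  have P22 := pc' (4*π/13) (4*π/13) (8*π/13) 0 (by congr 1; ring) (by congr 1; ring)
  have P23 := pc' (4*π/13) (6*π/13) (10*π/13) (2*π/13) (by congr 1; ring)
    (by rw [show 4*π/13 - 6*π/13 = -(2*π/13) by ring, Real.cos_neg])
  have P33 := pc' (6*π/13) (6*π/13) (12*π/13) 0 (by congr 1; ring) (by congr 1; ring)
  have hc0 : Real.cos 0 = 1 := Real.cos_zero
  unfold zeta zeta'
  linear_combination P22 + 2*P23 + P33 + csum + 4*hc0

/-- The restriction matrix `A_{EH1}` of the extended Haagerup subfactor. -/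
def A_EH1 : Matrix (Fin 6) (Fin 22) ℝ :=
  !![1,1,1,1,1,1,0,0,0,0,0,0,0,0,0,0,0,0,0,0,0,0;
     0,1,1,2,1,0,1,1,1,1,1,1,1,1,0,0,0,0,1,1,1,1;
     0,2,1,1,1,3,2,2,2,2,2,2,2,2,1,1,1,1,1,1,1,1;
     0,4,1,2,4,2,3,3,3,3,4,4,4,4,3,3,3,3,1,1,1,1;
     0,5,1,4,2,3,3,3,3,3,5,5,5,5,4,4,4,4,1,1,1,1;
     0,3,1,1,2,2,1,1,1,1,3,3,3,3,2,2,2,2,1,1,1,1]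

/-- The (rescaled) vector of Perron–Frobenius dimensions of the 22 simple
objects of the centre of extended Haagerup. -/
noncomputable def vEH : Fin 22 → ℝ :=
  ![(7 - 5 * zeta') / 65, (12 + 5 * zeta + 5 * zeta') / 65, (7 - 5 * zeta) / 65,
    1/5, 1/5, 1/5, 1/5, 1/5, 1/5, 1/5,
    (1 + zeta + 2 * zeta') / 13, (1 + zeta + 2 * zeta') / 13,
    (1 + zeta + 2 * zeta') / 13, (1 + zeta + 2 * zeta') / 13,
    (1 + 2 * zeta + zeta') / 13, (1 + 2 * zeta + zeta') / 13,
    (1 + 2 * zeta + zeta') / 13, (1 + 2 * zeta + zeta') / 13,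
    (zeta' - zeta) / 13, (zeta' - zeta) / 13,
    (zeta' - zeta) / 13, (zeta' - zeta) / 13]


lemma vec_eq {n : ℕ} {x y : ℝ} {u v : Fin n → ℝ} (h1 : x = y) (h2 : u = v) :
    Matrix.vecCons x u = Matrix.vecCons y v := by rw [h1, h2]

set_option maxHeartbeats 1000000 in
lemma hw : A_EH1.mulVec vEH =
    ![1, 2 + zeta', 4 + zeta + 2*zeta', 7 + 3*zeta + 4*zeta',
      8 + 4*zeta + 5*zeta', 4 + 2*zeta + 3*zeta'] := by
  simp only [A_EH1, vEH, Matrix.cons_mulVec, Matrix.cons_dotProduct,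
    Matrix.dotProduct_of_isEmpty, Matrix.empty_mulVec, add_zero, Matrix.head_cons, Matrix.tail_cons]
  refine vec_eq ?_ (vec_eq ?_ (vec_eq ?_ (vec_eq ?_ (vec_eq ?_ (vec_eq ?_ (Subsingleton.elim _ _))))))
  all_goals ring

set_option maxHeartbeats 1000000 in
theorem stmt_11 :
    (A_EH1ᵀ * A_EH1).mulVec vEH = (295 + 125 * zeta + 175 * zeta') • vEH := by
  have h1 := hzz
  have h2 := hzzp
  have h3 := hzpzp
  rw [← Matrix.mulVec_mulVec, hw, Matrix.mulVec_transpose]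
  simp only [A_EH1, vEH, Matrix.vecMul_cons, Matrix.empty_vecMul, Matrix.smul_cons,
    Matrix.smul_empty, Matrix.cons_add, Matrix.add_cons, Matrix.empty_add_empty,
    Matrix.head_cons, smul_eq_mul,
    add_zero, zero_add, Matrix.tail_cons]
  refine vec_eq ?_ (vec_eq ?_ (vec_eq ?_ (vec_eq ?_ (vec_eq ?_ (vec_eq ?_ (vec_eq ?_ (vec_eq ?_ (vec_eq ?_ (vec_eq ?_ (vec_eq ?_ (vec_eq ?_ (vec_eq ?_ (vec_eq ?_ (vec_eq ?_ (vec_eq ?_ (vec_eq ?_ (vec_eq ?_ (vec_eq ?_ (vec_eq ?_ (vec_eq ?_ (vec_eq ?_ (Subsingleton.elim _ _))))))))))))))))))))))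
  · linear_combination (125/13) * h2 + (175/13) * h3
  · linear_combination (-125/13) * h1 + (-300/13) * h2 + (-175/13) * h3
  · linear_combination (125/13) * h1 + (175/13) * h2
  · linear_combination (0:ℝ) * h1
  · linear_combination (0:ℝ) * h1
  · linear_combination (0:ℝ) * h1
  · linear_combination (0:ℝ) * h1
  · linear_combination (0:ℝ) * h1
  · linear_combination (0:ℝ) * h1
  · linear_combination (0:ℝ) * h1
  · linear_combination (-125/13) * h1 + (-425/13) * h2 + (-350/13) * h3
  · linear_combination (-125/13) * h1 + (-425/13) * h2 + (-350/13) * h3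
  · linear_combination (-125/13) * h1 + (-425/13) * h2 + (-350/13) * h3
  · linear_combination (-125/13) * h1 + (-425/13) * h2 + (-350/13) * h3
  · linear_combination (-250/13) * h1 + (-475/13) * h2 + (-175/13) * h3
  · linear_combination (-250/13) * h1 + (-475/13) * h2 + (-175/13) * h3
  · linear_combination (-250/13) * h1 + (-475/13) * h2 + (-175/13) * h3
  · linear_combination (-250/13) * h1 + (-475/13) * h2 + (-175/13) * h3
  · linear_combination (125/13) * h1 + (50/13) * h2 + (-175/13) * h3
  · linear_combination (125/13) * h1 + (50/13) * h2 + (-175/13) * h3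
  · linear_combination (125/13) * h1 + (50/13) * h2 + (-175/13) * h3
  · linear_combination (125/13) * h1 + (50/13) * h2 + (-175/13) * h3
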